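/- In a deterministic finite episodic MDP (deterministic transitions and rewards, but stochastic policy), if Q̃^{π_θ} = Q^{π_θ} exactly and ∇_θ Q̃^{π_θ} = ∇_θ Q^{π_θ} exactly, then the DR-PG estimator is deterministic: its covariance matrix is the zero matrix, i.e., it equals ∇_θ J(π_θ) with probability 1. -/

import Mathlib

set_option linter.unusedSectionVars false
set_option linter.unusedVariables false
set_option maxHeartbeats 1000000


open Finset

variable {S A : Type} [Fintype S] [Fintype A]

/-- state sequence of a deterministic MDP: `s₀` fixed, `s_{t+1} = P(s_t, a_t)`. -/
def detSt (T : ℕ) (Pd : S → A → S) (s0 : S) (acts : Fin (T + 1) → A) : ℕ → S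
  | 0 => s0
  | t + 1 => Pd (detSt T Pd s0 acts t) (acts ⟨min t T, by omega⟩)

/-- action at time `t` (index clamped). -/
def detAc (T : ℕ) (acts : Fin (T + 1) → A) (t : ℕ) : A := acts ⟨min t T, by omega⟩

/-- true state-value function `V^π` of the deterministic MDP at time `t`. -/
def detV (T : ℕ) (γ : ℝ) (Pd : S → A → S) (rf : S → A → ℝ) (π : S → A → ℝ) :
    ℕ → S → ℝ := fun t s =>
  if _h : T + 1 ≤ t then 0
  else ∑ a, π s a * (rf s a + γ * detV T γ Pd rf π (t + 1) (Pd s a))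
  termination_by t => T + 1 - t
  decreasing_by omega

/-- true Q-value function `Q^π` of the deterministic MDP at time `t`. -/
def detQ (T : ℕ) (γ : ℝ) (Pd : S → A → S) (rf : S → A → ℝ) (π : S → A → ℝ)
    (t : ℕ) (s : S) (a : A) : ℝ :=
  rf s a + γ * detV T γ Pd rf π (t + 1) (Pd s a)

/-- probability of an action sequence under policy `π`. -/
def detProb (T : ℕ) (Pd : S → A → S) (s0 : S) (π : S → A → ℝ)
    (acts : Fin (T + 1) → A) : ℝ :=
  ∏ t ∈ range (T + 1), π (detSt T Pd s0 acts t) (detAc T acts t)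

/-- the DR-PG estimator for the deterministic MDP, with the accurate side
information `Q̃^{π_θ} = Q^{π_θ}` and `∇_θ Q̃^{π_θ} = ∇_θ Q^{π_θ}` (so that also
`Ṽ^{π_θ} = V^{π_θ}`). -/
noncomputable def detDRPG {d : ℕ} (T : ℕ) (γ : ℝ) (Pd : S → A → S) (rf : S → A → ℝ)
    (s0 : S) (θ : Fin d → ℝ) (πf : (Fin d → ℝ) → S → A → ℝ)
    (acts : Fin (T + 1) → A) : Fin d → ℝ := fun i =>
  ∑ t ∈ range (T + 1),
    (((∑ t1 ∈ Finset.Icc t T, γ ^ t1 *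
          rf (detSt T Pd s0 acts t1) (detAc T acts t1))
      + ∑ t2 ∈ Finset.Icc (t + 1) T, γ ^ t2 *
          (detV T γ Pd rf (πf θ) t2 (detSt T Pd s0 acts t2)
            - detQ T γ Pd rf (πf θ) t2 (detSt T Pd s0 acts t2) (detAc T acts t2)))
      * fderiv ℝ (fun θ' => Real.log (πf θ' (detSt T Pd s0 acts t) (detAc T acts t))) θ
          (Pi.single i 1)
    + γ ^ t *
        (fderiv ℝ (fun θ' => detV T γ Pd rf (πf θ') t (detSt T Pd s0 acts t)) θ
            (Pi.single i 1)
          - fderiv ℝ (fun θ' =>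
              detQ T γ Pd rf (πf θ') t (detSt T Pd s0 acts t) (detAc T acts t)) θ
              (Pi.single i 1)
          - detQ T γ Pd rf (πf θ) t (detSt T Pd s0 acts t) (detAc T acts t) *
              fderiv ℝ (fun θ' =>
                  Real.log (πf θ' (detSt T Pd s0 acts t) (detAc T acts t))) θ
                (Pi.single i 1)))

/-- (unconditional) covariance matrix over a finite sample space. -/
noncomputable def covMat {Ω : Type} [Fintype Ω] {d : ℕ} (p : Ω → ℝ) (Z : Ω → Fin d → ℝ) :
    Matrix (Fin d) (Fin d) ℝ := fun i j =>
  (∑ ω, p ω * (Z ω i * Z ω j)) - (∑ ω, p ω * Z ω i) * (∑ ω, p ω * Z ω j)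



lemma aux_detV_top {T : ℕ} {γ : ℝ} {Pd : S → A → S} {rf : S → A → ℝ} {π : S → A → ℝ}
    {t : ℕ} (h : T + 1 ≤ t) (s : S) : detV T γ Pd rf π t s = 0 := by
  rw [detV]; simp [h]

lemma aux_detV_step {T : ℕ} {γ : ℝ} {Pd : S → A → S} {rf : S → A → ℝ} {π : S → A → ℝ}
    {t : ℕ} (h : t ≤ T) (s : S) : detV T γ Pd rf π t s
      = ∑ a, π s a * (rf s a + γ * detV T γ Pd rf π (t + 1) (Pd s a)) := by
  rw [detV]; simp [Nat.not_le.mpr (by omega : t < T + 1)]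

lemma aux_detSt_succ (T : ℕ) (Pd : S → A → S) (s0 : S) (acts : Fin (T+1) → A) (t : ℕ) :
    detSt T Pd s0 acts (t+1) = Pd (detSt T Pd s0 acts t) (detAc T acts t) := rfl

lemma aux_detSt_shift (T : ℕ) (Pd : S → A → S) (s0 : S) (acts : Fin (T+2) → A) :
    ∀ u, detSt (T+1) Pd s0 acts (u+1) = detSt T Pd (Pd s0 (acts 0)) (Fin.tail acts) u := by
  intro u
  induction u with
  | zero =>
      show Pd s0 (acts ⟨min 0 (T+1), _⟩) = Pd s0 (acts 0)
      congr 1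
  | succ u ih =>
      show Pd (detSt (T+1) Pd s0 acts (u+1)) (acts ⟨min (u+1) (T+1), _⟩)
          = Pd (detSt T Pd (Pd s0 (acts 0)) (Fin.tail acts) u) (Fin.tail acts ⟨min u T, _⟩)
      rw [ih]
      congr 1
      show acts ⟨min (u+1) (T+1), _⟩ = acts (Fin.succ ⟨min u T, _⟩)
      congr 1
      ext
      simp [Nat.succ_min_succ]

lemma aux_detAc_shift (T : ℕ) (acts : Fin (T+2) → A) (u : ℕ) :
    detAc (T+1) acts (u+1) = detAc T (Fin.tail acts) u := by
  show acts ⟨min (u+1) (T+1), _⟩ = acts (Fin.succ ⟨min u T, _⟩)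
  congr 1
  ext
  simp [Nat.succ_min_succ]

lemma aux_detAc_zero (T : ℕ) (acts : Fin (T+1) → A) : detAc T acts 0 = acts 0 := by
  show acts ⟨min 0 T, _⟩ = acts 0
  congr 1

lemma aux_detV_shift (T : ℕ) (γ : ℝ) (Pd : S → A → S) (rf : S → A → ℝ) (π : S → A → ℝ) :
    ∀ t s, detV (T+1) γ Pd rf π (t+1) s = detV T γ Pd rf π t s := by
  intro t s
  by_cases h : t ≤ T
  · rw [aux_detV_step (by omega) s, aux_detV_step h s]
    refine Finset.sum_congr rfl fun a _ => ?_
    rw [aux_detV_shift T γ Pd rf π (t+1) (Pd s a)]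
  · rw [aux_detV_top (by omega) s, aux_detV_top (by omega) s]
  termination_by t => T + 1 - t

lemma aux_detProb_cons (T : ℕ) (Pd : S → A → S) (s0 : S) (π : S → A → ℝ)
    (a : A) (rest : Fin (T+1) → A) :
    detProb (T+1) Pd s0 π (Fin.cons a rest) = π s0 a * detProb T Pd (Pd s0 a) π rest := by
  unfold detProb
  rw [Finset.prod_range_succ']
  have h0 : (Fin.cons a rest : Fin (T+2) → A) 0 = a := by simp
  have ht : Fin.tail (Fin.cons a rest : Fin (T+2) → A) = rest := by simp
  rw [mul_comm]
  congr 1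
  · refine Finset.prod_congr rfl fun u _ => ?_
    rw [aux_detSt_shift, aux_detAc_shift, h0, ht]

lemma aux_ret_cons (T : ℕ) (γ : ℝ) (Pd : S → A → S) (rf : S → A → ℝ) (s0 : S)
    (a : A) (rest : Fin (T+1) → A) :
    ∑ t ∈ range (T+2), γ^t * rf (detSt (T+1) Pd s0 (Fin.cons a rest) t)
        (detAc (T+1) (Fin.cons a rest) t)
      = rf s0 a + γ * ∑ t ∈ range (T+1), γ^t * rf (detSt T Pd (Pd s0 a) rest t)
          (detAc T rest t) := by
  rw [Finset.sum_range_succ', Finset.mul_sum]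
  have h0 : (Fin.cons a rest : Fin (T+2) → A) 0 = a := by simp
  have ht : Fin.tail (Fin.cons a rest : Fin (T+2) → A) = rest := by simp
  rw [add_comm]
  congr 1
  · rw [aux_detAc_zero]
    show γ^0 * rf s0 ((Fin.cons a rest : Fin (T+2) → A) 0) = rf s0 a
    rw [h0]; ring
  · refine Finset.sum_congr rfl fun u _ => ?_
    rw [aux_detSt_shift, aux_detAc_shift, h0, ht]
    ring

lemma aux_sum_cons (T : ℕ) (F : (Fin (T+2) → A) → ℝ) :
    ∑ acts : Fin (T+2) → A, F acts = ∑ a : A, ∑ rest : Fin (T+1) → A, F (Fin.cons a rest) := by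
  rw [← (Fin.consEquiv (fun _ : Fin (T+2) => A)).sum_comp F, Fintype.sum_prod_type]
  rfl

lemma aux_detProb_sum_one (T : ℕ) (Pd : S → A → S) (π : S → A → ℝ)
    (hπ : ∀ s, ∑ a, π s a = 1) :
    ∀ s0 : S, ∑ acts : Fin (T+1) → A, detProb T Pd s0 π acts = 1 := by
  induction T with
  | zero =>
      intro s0
      rw [← (Equiv.funUnique (Fin 1) A).symm.sum_comp]
      have : ∀ a : A, detProb 0 Pd s0 π ((Equiv.funUnique (Fin 1) A).symm a) = π s0 a := by
        intro a
        simp [detProb, detAc, detSt]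
      rw [Finset.sum_congr rfl fun a _ => this a]
      exact hπ s0
  | succ T ih =>
      intro s0
      rw [aux_sum_cons]
      have : ∀ a : A, ∑ rest : Fin (T+1) → A, detProb (T+1) Pd s0 π (Fin.cons a rest)
          = π s0 a := by
        intro a
        simp only [aux_detProb_cons, ← Finset.mul_sum, ih (Pd s0 a), mul_one]
      rw [Finset.sum_congr rfl fun a _ => this a]
      exact hπ s0

lemma aux_detV_eq_J (T : ℕ) (γ : ℝ) (Pd : S → A → S) (rf : S → A → ℝ) (π : S → A → ℝ)
    (hπ : ∀ s, ∑ a, π s a = 1) :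
    ∀ s0 : S, detV T γ Pd rf π 0 s0
      = ∑ acts : Fin (T+1) → A, detProb T Pd s0 π acts *
          ∑ t ∈ range (T+1), γ^t * rf (detSt T Pd s0 acts t) (detAc T acts t) := by
  induction T with
  | zero =>
      intro s0
      rw [← (Equiv.funUnique (Fin 1) A).symm.sum_comp]
      rw [aux_detV_step (le_refl 0) s0]
      have : ∀ a : A, detProb 0 Pd s0 π ((Equiv.funUnique (Fin 1) A).symm a) *
          ∑ t ∈ range 1, γ^t * rf (detSt 0 Pd s0 ((Equiv.funUnique (Fin 1) A).symm a) t)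
            (detAc 0 ((Equiv.funUnique (Fin 1) A).symm a) t)
          = π s0 a * rf s0 a := by
        intro a
        simp [detProb, detAc, detSt]
      rw [Finset.sum_congr rfl fun a _ => this a]
      refine Finset.sum_congr rfl fun a _ => ?_
      rw [aux_detV_top (by omega) (Pd s0 a)]
      ring
  | succ T ih =>
      intro s0
      rw [aux_sum_cons, aux_detV_step (by omega) s0]
      refine Finset.sum_congr rfl fun a _ => ?_
      have : ∀ rest : Fin (T+1) → A,
          detProb (T+1) Pd s0 π (Fin.cons a rest) *
            ∑ t ∈ range (T+2), γ^t * rf (detSt (T+1) Pd s0 (Fin.cons a rest) t)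
              (detAc (T+1) (Fin.cons a rest) t)
          = π s0 a * ((detProb T Pd (Pd s0 a) π rest) * rf s0 a
              + γ * (detProb T Pd (Pd s0 a) π rest *
                  ∑ t ∈ range (T+1), γ^t * rf (detSt T Pd (Pd s0 a) rest t) (detAc T rest t))) := by
        intro rest
        rw [aux_detProb_cons, aux_ret_cons]
        ring
      rw [Finset.sum_congr rfl fun rest _ => this rest, ← Finset.mul_sum]
      congr 1
      rw [Finset.sum_add_distrib, ← Finset.sum_mul, aux_detProb_sum_one T Pd π hπ (Pd s0 a),
        ← Finset.mul_sum, ← ih (Pd s0 a), aux_detV_shift]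
      ring
lemma aux_detV_diff {d : ℕ} (T : ℕ) (γ : ℝ) (Pd : S → A → S) (rf : S → A → ℝ)
    (πf : (Fin d → ℝ) → S → A → ℝ) (hdiff : ∀ s a, Differentiable ℝ (fun θ' => πf θ' s a)) :
    ∀ t s, Differentiable ℝ (fun θ' => detV T γ Pd rf (πf θ') t s) := by
  intro t s
  by_cases h : t ≤ T
  · have heq : (fun θ' : Fin d → ℝ => detV T γ Pd rf (πf θ') t s)
        = fun θ' => ∑ a, πf θ' s a * (rf s a + γ * detV T γ Pd rf (πf θ') (t+1) (Pd s a)) :=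
      funext fun θ' => aux_detV_step h s
    rw [heq]
    apply Differentiable.fun_sum
    intro a _
    exact (hdiff s a).mul ((differentiable_const _).add
      ((differentiable_const _).mul (aux_detV_diff T γ Pd rf πf hdiff (t+1) (Pd s a))))
  · have heq : (fun θ' : Fin d → ℝ => detV T γ Pd rf (πf θ') t s) = fun _ => 0 :=
      funext fun θ' => aux_detV_top (by omega) s
    rw [heq]; exact differentiable_const 0
  termination_by t => T + 1 - t

lemma aux_fderiv_detQ {d : ℕ} (T : ℕ) (γ : ℝ) (Pd : S → A → S) (rf : S → A → ℝ)
    (πf : (Fin d → ℝ) → S → A → ℝ) (hdiff : ∀ s a, Differentiable ℝ (fun θ' => πf θ' s a))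
    (t : ℕ) (s : S) (a : A) (θ : Fin d → ℝ) (v : Fin d → ℝ) :
    fderiv ℝ (fun θ' => detQ T γ Pd rf (πf θ') t s a) θ v
      = γ * fderiv ℝ (fun θ' => detV T γ Pd rf (πf θ') (t+1) (Pd s a)) θ v := by
  unfold detQ
  rw [fderiv_const_add,
    fderiv_const_mul ((aux_detV_diff T γ Pd rf πf hdiff (t+1) (Pd s a)) θ)]
  simp

lemma aux_fderiv_detV_top {d : ℕ} (T : ℕ) (γ : ℝ) (Pd : S → A → S) (rf : S → A → ℝ)
    (πf : (Fin d → ℝ) → S → A → ℝ) {t : ℕ} (h : T + 1 ≤ t) (s : S) (θ : Fin d → ℝ) :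
    fderiv ℝ (fun θ' => detV T γ Pd rf (πf θ') t s) θ = 0 := by
  have heq : (fun θ' : Fin d → ℝ => detV T γ Pd rf (πf θ') t s) = fun _ => 0 :=
    funext fun θ' => aux_detV_top h s
  rw [heq]; exact fderiv_const_apply 0

lemma aux_Icc_split (a T : ℕ) (h : a ≤ T) (f : ℕ → ℝ) :
    ∑ x ∈ Finset.Icc a T, f x = f a + ∑ x ∈ Finset.Icc (a+1) T, f x := by
  rw [show Finset.Icc a T = insert a (Finset.Icc (a+1) T) by
    rw [Finset.Icc_add_one_left_eq_Ioc a T, Finset.Ioc_insert_left h]]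
  rw [Finset.sum_insert (by simp)]

lemma aux_bracket (T : ℕ) (γ : ℝ) (Pd : S → A → S) (rf : S → A → ℝ) (π : S → A → ℝ)
    (s0 : S) (acts : Fin (T+1) → A) :
    ∀ t, t ≤ T →
      (∑ t1 ∈ Finset.Icc t T, γ ^ t1 * rf (detSt T Pd s0 acts t1) (detAc T acts t1))
        + ∑ t2 ∈ Finset.Icc (t + 1) T, γ ^ t2 *
            (detV T γ Pd rf π t2 (detSt T Pd s0 acts t2)
              - detQ T γ Pd rf π t2 (detSt T Pd s0 acts t2) (detAc T acts t2))
      = γ ^ t * detQ T γ Pd rf π t (detSt T Pd s0 acts t) (detAc T acts t) := by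
  intro t ht
  by_cases h : t = T
  · subst h
    rw [show Finset.Icc (t+1) t = (∅ : Finset ℕ) from Finset.Icc_eq_empty (by omega),
      Finset.Icc_self, Finset.sum_singleton, Finset.sum_empty, add_zero]
    unfold detQ
    rw [aux_detV_top (by omega)]
    ring
  · have ht' : t + 1 ≤ T := by omega
    have hsplitR := aux_Icc_split t T ht
      (fun x => γ ^ x * rf (detSt T Pd s0 acts x) (detAc T acts x))
    have hsplitW := aux_Icc_split (t+1) T ht'
      (fun x => γ ^ x * (detV T γ Pd rf π x (detSt T Pd s0 acts x)
        - detQ T γ Pd rf π x (detSt T Pd s0 acts x) (detAc T acts x)))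
    have ih := aux_bracket T γ Pd rf π s0 acts (t+1) ht'
    have hQ : detQ T γ Pd rf π t (detSt T Pd s0 acts t) (detAc T acts t)
        = rf (detSt T Pd s0 acts t) (detAc T acts t)
          + γ * detV T γ Pd rf π (t+1) (detSt T Pd s0 acts (t+1)) := by
      rw [aux_detSt_succ]; rfl
    rw [hsplitR, hsplitW, hQ]
    linear_combination ih
  termination_by t => T - t
  decreasing_by omega

lemma aux_detDRPG_const {d : ℕ} (T : ℕ) (γ : ℝ) (Pd : S → A → S) (rf : S → A → ℝ)
    (s0 : S) (θ : Fin d → ℝ) (πf : (Fin d → ℝ) → S → A → ℝ)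
    (hdiff : ∀ s a, Differentiable ℝ (fun θ' => πf θ' s a))
    (acts : Fin (T+1) → A) (i : Fin d) :
    detDRPG T γ Pd rf s0 θ πf acts i
      = fderiv ℝ (fun θ' => detV T γ Pd rf (πf θ') 0 s0) θ (Pi.single i 1) := by
  set g : ℕ → ℝ := fun t => γ ^ t *
    fderiv ℝ (fun θ' => detV T γ Pd rf (πf θ') t (detSt T Pd s0 acts t)) θ (Pi.single i 1)
    with hgdef
  have hend : g (T+1) = 0 := by
    rw [hgdef]
    simp only
    rw [aux_fderiv_detV_top T γ Pd rf πf (le_refl (T+1))]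
    simp
  have hsum : detDRPG T γ Pd rf s0 θ πf acts i = ∑ t ∈ range (T+1), (g t - g (t+1)) := by
    unfold detDRPG
    refine Finset.sum_congr rfl fun t ht => ?_
    have htT : t ≤ T := by
      have := Finset.mem_range.mp ht; omega
    rw [aux_bracket T γ Pd rf (πf θ) s0 acts t htT,
      aux_fderiv_detQ T γ Pd rf πf hdiff t (detSt T Pd s0 acts t) (detAc T acts t) θ
        (Pi.single i 1)]
    rw [hgdef]
    simp only
    rw [show detSt T Pd s0 acts (t+1) = Pd (detSt T Pd s0 acts t) (detAc T acts t) from rfl]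
    ring
  rw [hsum, Finset.sum_range_sub' g (T+1), hend, sub_zero, hgdef]
  simp only
  rw [show detSt T Pd s0 acts 0 = s0 from rfl]
  ring

/-- in a deterministic finite episodic MDP (deterministic
transitions `Pd` and rewards `rf`, stochastic policy `π_θ`), if the
approximate Q-function and its θ-gradient are exact, the DR-PG estimator is
deterministic: its covariance matrix is zero, i.e. it equals
`∇_θ J(π_θ)` with probability 1 (here: for every action sequence). -/
theorem drpg_deterministic_mdp_zero_variance (T : ℕ) (γ : ℝ)
    (Pd : S → A → S) (rf : S → A → ℝ) (s0 : S)
    {d : ℕ} (θ : Fin d → ℝ) (πf : (Fin d → ℝ) → S → A → ℝ)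
    (hpol : ∀ θ' s, (∀ a, 0 ≤ πf θ' s a) ∧ ∑ a, πf θ' s a = 1)
    (hpos : ∀ θ' s a, 0 < πf θ' s a)
    (hdiff : ∀ s a, Differentiable ℝ (fun θ' => πf θ' s a)) :
    covMat (detProb T Pd s0 (πf θ)) (detDRPG T γ Pd rf s0 θ πf) = 0
    ∧ ∀ acts : Fin (T + 1) → A, ∀ i,
        detDRPG T γ Pd rf s0 θ πf acts i
          = fderiv ℝ (fun θ' => ∑ acts' : Fin (T + 1) → A,
              detProb T Pd s0 (πf θ') acts' *
                ∑ t ∈ range (T + 1), γ ^ t *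
                  rf (detSt T Pd s0 acts' t) (detAc T acts' t)) θ (Pi.single i 1) := by
  have hone : ∑ acts : Fin (T+1) → A, detProb T Pd s0 (πf θ) acts = 1 :=
    aux_detProb_sum_one T Pd (πf θ) (fun s => (hpol θ s).2) s0
  have hfun : (fun θ' => ∑ acts' : Fin (T + 1) → A,
        detProb T Pd s0 (πf θ') acts' *
          ∑ t ∈ range (T + 1), γ ^ t *
            rf (detSt T Pd s0 acts' t) (detAc T acts' t))
      = fun θ' => detV T γ Pd rf (πf θ') 0 s0 :=
    funext fun θ' => (aux_detV_eq_J T γ Pd rf (πf θ') (fun s => (hpol θ' s).2) s0).symm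
  constructor
  · funext i j
    show (∑ ω, detProb T Pd s0 (πf θ) ω *
          (detDRPG T γ Pd rf s0 θ πf ω i * detDRPG T γ Pd rf s0 θ πf ω j))
        - (∑ ω, detProb T Pd s0 (πf θ) ω * detDRPG T γ Pd rf s0 θ πf ω i)
          * (∑ ω, detProb T Pd s0 (πf θ) ω * detDRPG T γ Pd rf s0 θ πf ω j) = 0
    simp only [aux_detDRPG_const T γ Pd rf s0 θ πf hdiff]
    have h1 : ∀ c : ℝ, ∑ ω : Fin (T+1) → A, detProb T Pd s0 (πf θ) ω * c = c := by
      intro c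
      rw [← Finset.sum_mul, hone, one_mul]
    rw [h1, h1, h1]
    ring
  · intro acts i
    rw [hfun]
    exact aux_detDRPG_const T γ Pd rf s0 θ πf hdiff acts i
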